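/- Fix σ > 0 and a real number r ≥ 1. For (b,d) ∈ ℝ², define k_{b,d} : ℝ² → ℝ by k_{b,d}(x,y) = (1/(2πσ²))·(2 − max(|b−x|, |d−y|)/σ)₊^r · exp(−((b−x)² + (d−y)²)/(2σ²)), where (a)₊ = max(a,0). Then for all (b,d), (b',d'), (x,y) ∈ ℝ²: |k_{b,d}(x,y) − k_{b',d'}(x,y)| ≤ (2^{r−1}(r+2)/(πσ³))·max(|b−b'|, |d−d'|). -/

import Mathlib

open Real

private lemma gauss_lip (σ : ℝ) (hσ : 0 < σ) (u u' : ℝ) :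
    |Real.exp (-(u ^ 2 / (2 * σ ^ 2))) - Real.exp (-(u' ^ 2 / (2 * σ ^ 2)))|
      ≤ (1 / σ) * |u - u'| := by
  have key : ∀ t : ℝ, ‖-(t / σ ^ 2) * Real.exp (-(t ^ 2 / (2 * σ ^ 2)))‖ ≤ 1 / σ := by
    intro t
    have hX : (0:ℝ) < Real.exp (t ^ 2 / (2 * σ ^ 2)) := Real.exp_pos _
    have h1 : 1 + t ^ 2 / (2 * σ ^ 2) ≤ Real.exp (t ^ 2 / (2 * σ ^ 2)) := by
      have := Real.add_one_le_exp (t ^ 2 / (2 * σ ^ 2)); linarith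
    have hs : |t| ^ 2 = t ^ 2 := sq_abs t
    have h3 : |t| ≤ σ + t ^ 2 / (2 * σ) := by
      rw [← hs, ← sub_nonneg,
        show σ + |t| ^ 2 / (2 * σ) - |t| = (|t| - σ) ^ 2 / (2 * σ) + σ / 2 by
          field_simp
          ring]
      positivity
    have h4 : σ * (1 + t ^ 2 / (2 * σ ^ 2)) = σ + t ^ 2 / (2 * σ) := by field_simp
    have hkey : |t| ≤ σ * Real.exp (t ^ 2 / (2 * σ ^ 2)) := by
      refine h3.trans ?_
      rw [← h4]
      exact mul_le_mul_of_nonneg_left h1 hσ.le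
    have hE : Real.exp (-(t ^ 2 / (2 * σ ^ 2))) = (Real.exp (t ^ 2 / (2 * σ ^ 2)))⁻¹ :=
      Real.exp_neg _
    rw [norm_mul, norm_neg, Real.norm_eq_abs, Real.norm_eq_abs, abs_div,
      abs_of_nonneg (Real.exp_pos _).le, abs_of_nonneg (by positivity : (0:ℝ) ≤ σ ^ 2)]
    rw [div_mul_eq_mul_div, div_le_div_iff₀ (by positivity) hσ]
    calc |t| * Real.exp (-(t ^ 2 / (2 * σ ^ 2))) * σ
        ≤ (σ * Real.exp (t ^ 2 / (2 * σ ^ 2))) * Real.exp (-(t ^ 2 / (2 * σ ^ 2))) * σ := by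
          exact mul_le_mul_of_nonneg_right
            (mul_le_mul_of_nonneg_right hkey (Real.exp_pos _).le) hσ.le
      _ = σ * σ := by rw [hE]; field_simp
      _ = 1 * σ ^ 2 := by ring
  have hd : ∀ t : ℝ, HasDerivAt (fun s : ℝ => Real.exp (-(s ^ 2 / (2 * σ ^ 2))))
      (-(t / σ ^ 2) * Real.exp (-(t ^ 2 / (2 * σ ^ 2)))) t := by
    intro t
    have h1 : HasDerivAt (fun s : ℝ => -(s ^ 2 / (2 * σ ^ 2))) (-(t / σ ^ 2)) t := by
      have := ((hasDerivAt_pow 2 t).div_const (2 * σ ^ 2)).neg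
      convert this using 1
      · rfl
      · rfl
      · rfl
      field_simp
      ring
    have := h1.exp
    convert this using 1
    ring
  have H := Convex.norm_image_sub_le_of_norm_hasDerivWithin_le
    (f := fun s : ℝ => Real.exp (-(s ^ 2 / (2 * σ ^ 2))))
    (f' := fun t => -(t / σ ^ 2) * Real.exp (-(t ^ 2 / (2 * σ ^ 2))))
    (s := Set.univ)
    (fun t _ => (hd t).hasDerivWithinAt) (fun t _ => key t) convex_univ
    (Set.mem_univ u') (Set.mem_univ u)
  simpa [Real.norm_eq_abs] using H

private lemma rpow_lip (r : ℝ) (hr : 1 ≤ r) (a c : ℝ) (ha : a ∈ Set.Icc (0:ℝ) 2)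
    (hc : c ∈ Set.Icc (0:ℝ) 2) : |a ^ r - c ^ r| ≤ r * 2 ^ (r - 1) * |a - c| := by
  have key : ∀ t ∈ Set.Icc (0:ℝ) 2, ‖r * t ^ (r - 1)‖ ≤ r * 2 ^ (r - 1) := by
    intro t ht
    rw [Real.norm_eq_abs, abs_mul, abs_of_nonneg (by linarith : (0:ℝ) ≤ r),
      abs_of_nonneg (Real.rpow_nonneg ht.1 _)]
    exact mul_le_mul_of_nonneg_left
      (Real.rpow_le_rpow ht.1 ht.2 (by linarith)) (by linarith)
  have H := Convex.norm_image_sub_le_of_norm_hasDerivWithin_le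
    (f := fun t : ℝ => t ^ r) (f' := fun t => r * t ^ (r - 1))
    (s := Set.Icc (0:ℝ) 2)
    (fun t _ => (Real.hasDerivAt_rpow_const (Or.inr hr)).hasDerivWithinAt)
    key (convex_Icc _ _) hc ha
  simpa [Real.norm_eq_abs] using H

/-- Lipschitz estimate, in the diagram point `(b,d)` and uniformly in `(x,y)`, for the
compactly supported modification of the persistence image kernel
`k_{b,d}(x,y) = (1/(2πσ²))·(2 − ‖(b,d)−(x,y)‖_∞/σ)₊^r · exp(−((b−x)²+(d−y)²)/(2σ²))`. -/
theorem stmt_10 (σ r : ℝ) (hσ : 0 < σ) (hr : 1 ≤ r) (b d b' d' x y : ℝ) :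
    |(1 / (2 * π * σ ^ 2)) * (max (2 - max |b - x| |d - y| / σ) 0) ^ r *
        Real.exp (-(((b - x) ^ 2 + (d - y) ^ 2) / (2 * σ ^ 2)))
      - (1 / (2 * π * σ ^ 2)) * (max (2 - max |b' - x| |d' - y| / σ) 0) ^ r *
        Real.exp (-(((b' - x) ^ 2 + (d' - y) ^ 2) / (2 * σ ^ 2)))|
      ≤ (2 ^ (r - 1) * (r + 2) / (π * σ ^ 3)) * max |b - b'| |d - d'| := by
  have hπ := Real.pi_pos
  set δ := max |b - b'| |d - d'| with hδdef
  have hδ : 0 ≤ δ := le_trans (abs_nonneg _) (le_max_left _ _)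
  set m := max |b - x| |d - y| with hm
  set m' := max |b' - x| |d' - y| with hm'
  set A := max (2 - m / σ) 0 with hA
  set A' := max (2 - m' / σ) 0 with hA'
  have hA0 : 0 ≤ A := le_max_right _ _
  have hA'0 : 0 ≤ A' := le_max_right _ _
  have hA2 : A ≤ 2 := by
    have : 2 - m / σ ≤ 2 := by
      have : 0 ≤ m / σ := div_nonneg (le_trans (abs_nonneg _) (le_max_left _ _)) hσ.le
      linarith
    exact max_le this (by norm_num)
  have hA'2 : A' ≤ 2 := by
    have : 2 - m' / σ ≤ 2 := by
      have : 0 ≤ m' / σ := div_nonneg (le_trans (abs_nonneg _) (le_max_left _ _)) hσ.le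
      linarith
    exact max_le this (by norm_num)
  -- |A - A'| ≤ δ / σ
  have hmm : |m - m'| ≤ δ := by
    refine (abs_max_sub_max_le_max _ _ _ _).trans (max_le_max ?_ ?_)
    · simpa [show b - x - (b' - x) = b - b' by ring]
        using abs_abs_sub_abs_le_abs_sub (b - x) (b' - x)
    · simpa [show d - y - (d' - y) = d - d' by ring]
        using abs_abs_sub_abs_le_abs_sub (d - y) (d' - y)
  have hAA : |A - A'| ≤ δ / σ := by
    refine (abs_max_sub_max_le_max _ _ _ _).trans ?_
    have h1 : |2 - m / σ - (2 - m' / σ)| = |m - m'| / σ := by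
      rw [show 2 - m / σ - (2 - m' / σ) = (m' - m) / σ by ring, abs_div,
        abs_of_pos hσ, abs_sub_comm]
    rw [sub_self, abs_zero]
    rw [max_eq_left (by positivity), h1]
    gcongr
  -- rpow difference
  set T := (2:ℝ) ^ (r - 1) with hT
  have hT0 : 0 < T := Real.rpow_pos_of_pos (by norm_num) _
  have h2r : (2:ℝ) ^ r = 2 * T := by
    rw [hT, ← Real.rpow_one_add' (by norm_num) (by intro h; linarith)]
    norm_num
  have hAr : |A ^ r - A' ^ r| ≤ r * T * (δ / σ) := by
    refine (rpow_lip r hr A A' ⟨hA0, hA2⟩ ⟨hA'0, hA'2⟩).trans ?_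
    exact mul_le_mul_of_nonneg_left hAA (by positivity)
  have hA'r : A' ^ r ≤ 2 * T := by
    rw [← h2r]
    exact Real.rpow_le_rpow hA'0 hA'2 (by linarith)
  -- Gaussian difference
  have hsplit : ∀ p q : ℝ, Real.exp (-((p ^ 2 + q ^ 2) / (2 * σ ^ 2)))
      = Real.exp (-(p ^ 2 / (2 * σ ^ 2))) * Real.exp (-(q ^ 2 / (2 * σ ^ 2))) := by
    intro p q
    rw [← Real.exp_add]
    congr 1
    ring
  set P := Real.exp (-((b - x) ^ 2 / (2 * σ ^ 2))) with hP
  set Q := Real.exp (-((d - y) ^ 2 / (2 * σ ^ 2))) with hQ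
  set P' := Real.exp (-((b' - x) ^ 2 / (2 * σ ^ 2))) with hP'
  set Q' := Real.exp (-((d' - y) ^ 2 / (2 * σ ^ 2))) with hQ'
  have hP0 : 0 < P := by rw [hP]; exact Real.exp_pos _
  have hQ0 : 0 < Q := by rw [hQ]; exact Real.exp_pos _
  have hP'0 : 0 < P' := by rw [hP']; exact Real.exp_pos _
  have hP1 : P ≤ 1 := by
    rw [hP]; exact Real.exp_le_one_iff.2 (neg_nonpos.2 (by positivity))
  have hQ1 : Q ≤ 1 := by
    rw [hQ]; exact Real.exp_le_one_iff.2 (neg_nonpos.2 (by positivity))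
  have hP'1 : P' ≤ 1 := by
    rw [hP']; exact Real.exp_le_one_iff.2 (neg_nonpos.2 (by positivity))
  have hPQ1 : P * Q ≤ 1 := by
    calc P * Q ≤ 1 * 1 := mul_le_mul hP1 hQ1 hQ0.le one_pos.le
      _ = 1 := by norm_num
  have hEE : |P * Q - P' * Q'| ≤ (2 / σ) * δ := by
    have h1 : |P - P'| ≤ (1 / σ) * δ := by
      refine (gauss_lip σ hσ (b - x) (b' - x)).trans ?_
      have : |b - x - (b' - x)| = |b - b'| := by ring_nf
      rw [this]
      exact mul_le_mul_of_nonneg_left (le_max_left _ _) (by positivity)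
    have h2 : |Q - Q'| ≤ (1 / σ) * δ := by
      refine (gauss_lip σ hσ (d - y) (d' - y)).trans ?_
      have : |d - y - (d' - y)| = |d - d'| := by ring_nf
      rw [this]
      exact mul_le_mul_of_nonneg_left (le_max_right _ _) (by positivity)
    calc |P * Q - P' * Q'|
        = |(P - P') * Q + P' * (Q - Q')| := by
          rw [show P * Q - P' * Q' = (P - P') * Q + P' * (Q - Q') by ring]
      _ ≤ |(P - P') * Q| + |P' * (Q - Q')| := abs_add_le _ _
      _ = |P - P'| * Q + P' * |Q - Q'| := by
          rw [abs_mul, abs_of_pos hQ0, abs_mul, abs_of_pos hP'0]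
      _ ≤ ((1 / σ) * δ) * 1 + 1 * ((1 / σ) * δ) :=
          add_le_add (mul_le_mul h1 hQ1 hQ0.le (mul_nonneg (by positivity) hδ))
            (mul_le_mul hP'1 h2 (abs_nonneg _) one_pos.le)
      _ = (2 / σ) * δ := by ring
  -- assemble
  set C := 1 / (2 * π * σ ^ 2) with hC
  have hC0 : 0 < C := by positivity
  have hmain : |C * A ^ r * (P * Q) - C * A' ^ r * (P' * Q')|
      ≤ C * (r * T * (δ / σ) + (2 * T) * ((2 / σ) * δ)) := by
    have e1 : C * A ^ r * (P * Q) - C * A' ^ r * (P' * Q')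
        = C * ((A ^ r - A' ^ r) * (P * Q) + A' ^ r * (P * Q - P' * Q')) := by ring
    rw [e1, abs_mul, abs_of_pos hC0]
    refine mul_le_mul_of_nonneg_left ?_ hC0.le
    calc |(A ^ r - A' ^ r) * (P * Q) + A' ^ r * (P * Q - P' * Q')|
        ≤ |(A ^ r - A' ^ r) * (P * Q)| + |A' ^ r * (P * Q - P' * Q')| := abs_add_le _ _
      _ = |A ^ r - A' ^ r| * (P * Q) + A' ^ r * |P * Q - P' * Q'| := by
          rw [abs_mul, abs_of_pos (mul_pos hP0 hQ0), abs_mul,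
            abs_of_nonneg (Real.rpow_nonneg hA'0 _)]
      _ ≤ (r * T * (δ / σ)) * 1 + (2 * T) * ((2 / σ) * δ) :=
          add_le_add
            (mul_le_mul hAr hPQ1 (mul_pos hP0 hQ0).le
              (mul_nonneg (mul_nonneg (by linarith) hT0.le) (div_nonneg hδ hσ.le)))
            (mul_le_mul hA'r hEE (abs_nonneg _)
              (by linarith))
      _ = r * T * (δ / σ) + (2 * T) * ((2 / σ) * δ) := by ring
  have hfin : C * (r * T * (δ / σ) + (2 * T) * ((2 / σ) * δ)) ≤ T * (r + 2) / (π * σ ^ 3) * δ := by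
    have e2 : C * (r * T * (δ / σ) + (2 * T) * ((2 / σ) * δ)) = T * (r + 4) * δ / (2 * π * σ ^ 3) := by
      rw [hC]
      field_simp
      ring
    have e3 : T * (r + 2) / (π * σ ^ 3) * δ = T * (2 * (r + 2)) * δ / (2 * π * σ ^ 3) := by
      field_simp
    rw [e2, e3]
    gcongr
    linarith
  calc |C * A ^ r * Real.exp (-(((b - x) ^ 2 + (d - y) ^ 2) / (2 * σ ^ 2)))
      - C * A' ^ r * Real.exp (-(((b' - x) ^ 2 + (d' - y) ^ 2) / (2 * σ ^ 2)))|
      = |C * A ^ r * (P * Q) - C * A' ^ r * (P' * Q')| := by rw [hsplit, hsplit]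
    _ ≤ C * (r * T * (δ / σ) + (2 * T) * ((2 / σ) * δ)) := hmain
    _ ≤ T * (r + 2) / (π * σ ^ 3) * δ := hfin
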